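/- Let F be a field, σ a sesqui-morphism on F, G a σ-symmetric F*-graph, and x,y vertices of G with M_G[x,y] ≠ 0. For every subset X of V_G, cutrk_{G∧xy}(X) = cutrk_G(X). -/

import Mathlib

open Classical

noncomputable section

/-- A bijection `σ : F → F` is a *sesqui-morphism* if it is an involution and
the map `x ↦ σ x / σ 1` is a field automorphism of `F`. -/
def IsSesquiMorphism {F : Type} [Field F] (σ : F → F) : Prop :=
  Function.Involutive σ ∧ ∃ φ : F ≃+* F, ∀ x, φ x = σ x / σ 1

/-- `M` is the adjacency matrix of a σ-symmetric F*-graph: zero diagonal and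
`M x y = σ (M y x)` for all `x, y`. -/
def IsSigmaSymmGraph {F V : Type} [Field F] (σ : F → F) (M : Matrix V V F) : Prop :=
  (∀ x, M x x = 0) ∧ ∀ x y, M x y = σ (M y x)

/-- Pivot complementation `G ∧ xy`. -/
def pivotComp {F V : Type} [Field F] (σ : F → F) (M : Matrix V V F) (x y : V) :
    Matrix V V F :=
  Matrix.of fun s u =>
    if s = u then 0
    else if s = x ∧ u = y then -1 / M y x
    else if s = y ∧ u = x then -(σ 1) ^ 2 / M x y
    else if s = x then M y u / M y x
    else if s = y then σ 1 * M x u / M x y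
    else if u = x then σ 1 * M s y / M x y
    else if u = y then M s x / M y x
    else M s u - M s x * M y u / M y x - M s y * M x u / M x y

/-- The cut-rank of `X`: the rank over `F` of the submatrix `M[X, Xᶜ]`. -/
def cutrk {F V : Type} [Field F] [Fintype V] (M : Matrix V V F) (X : Set V) : ℕ :=
  (Matrix.of fun (i : X) (j : (Xᶜ : Set V)) => M i j).rank

/-- The rank over `F` of the submatrix `M[X, Y]`. -/
def rkSub {F V : Type} [Field F] [Fintype V] (M : Matrix V V F) (X Y : Set V) : ℕ :=
  (Matrix.of fun (i : X) (j : Y) => M i j).rank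

/-- The width of a linear layout `π` (listing the vertices as positions `0, …, n-1`):
the maximum over `1 ≤ i ≤ n-1` of the cut-rank of the first `i` vertices. -/
def layoutWidth {F V : Type} [Field F] [Fintype V] (M : Matrix V V F)
    (π : V ≃ Fin (Fintype.card V)) : ℕ :=
  (Finset.Ico 1 (Fintype.card V)).sup fun i => cutrk M {v | (π v : ℕ) < i}

/-- The linear rank-width of `M`: the minimum width of a linear layout. -/
def lrw {F V : Type} [Field F] [Fintype V] (M : Matrix V V F) : ℕ :=
  ⨅ π : V ≃ Fin (Fintype.card V), layoutWidth M π

/-- `PivotEquiv σ G G'` holds if `G'` arises from `G` by a finite sequence of pivot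
complementations, each applied to an edge of the current graph. -/
inductive PivotEquiv {F V : Type} [Field F] (σ : F → F) :
    Matrix V V F → Matrix V V F → Prop
  | refl (M : Matrix V V F) : PivotEquiv σ M M
  | tail (M N : Matrix V V F) (x y : V) : x ≠ y → N x y ≠ 0 →
      PivotEquiv σ M N → PivotEquiv σ M (pivotComp σ N x y)

/-- `H` is a pivot-minor of `G`: `H` is simply isomorphic to an induced subgraph of
a graph pivot equivalent to `G`. -/
def IsPivotMinor {F V W : Type} [Field F] (σ : F → F)
    (H : Matrix W W F) (G : Matrix V V F) : Prop :=
  ∃ G' : Matrix V V F, PivotEquiv σ G G' ∧ ∃ h : W ↪ V, ∀ x y, H x y = G' (h x) (h y)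

end

open Matrix

section PivotEntryLemmas
variable {F V : Type} [Field F] (σ : F → F) (M : Matrix V V F) {x y s u : V}

private lemma pivot_xy (hne : x ≠ y) : pivotComp σ M x y x y = -1 / M y x := by
  simp [pivotComp, hne]
private lemma pivot_yx (hne : x ≠ y) : pivotComp σ M x y y x = -(σ 1) ^ 2 / M x y := by
  simp [pivotComp, Ne.symm hne]
private lemma pivot_xu (hne : x ≠ y) (hux : u ≠ x) (huy : u ≠ y) :
    pivotComp σ M x y x u = M y u / M y x := by
  simp [pivotComp, Ne.symm hux, huy, hne]
private lemma pivot_yu (hne : x ≠ y) (hux : u ≠ x) (huy : u ≠ y) :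
    pivotComp σ M x y y u = σ 1 * M x u / M x y := by
  simp [pivotComp, Ne.symm huy, Ne.symm hne, hux]
private lemma pivot_sx (hsx : s ≠ x) (hsy : s ≠ y) :
    pivotComp σ M x y s x = σ 1 * M s y / M x y := by
  simp [pivotComp, hsx, hsy]
private lemma pivot_sy (hne : x ≠ y) (hsx : s ≠ x) (hsy : s ≠ y) :
    pivotComp σ M x y s y = M s x / M y x := by
  simp [pivotComp, hsx, hsy, Ne.symm hne]
private lemma pivot_su (hsu : s ≠ u) (hsx : s ≠ x) (hsy : s ≠ y) (hux : u ≠ x) (huy : u ≠ y) :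
    pivotComp σ M x y s u = M s u - M s x * M y u / M y x - M s y * M x u / M x y := by
  simp [pivotComp, hsu, hsx, hsy, hux, huy]
end PivotEntryLemmas

section RankHelpers
variable {F : Type} [Field F]



private lemma span_rank_eq {m m' n : Type} [Fintype m] [Fintype m'] [Fintype n]
    (A : Matrix m n F) (B : Matrix m' n F)
    (hAB : ∀ i, A i ∈ Submodule.span F (Set.range B))
    (hBA : ∀ i, B i ∈ Submodule.span F (Set.range A)) :
    A.rank = B.rank := by
  rw [Matrix.rank_eq_finrank_span_row, Matrix.rank_eq_finrank_span_row]
  have h : Submodule.span F (Set.range A) = Submodule.span F (Set.range B) :=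
    le_antisymm (Submodule.span_le.2 (Set.range_subset_iff.2 hAB))
      (Submodule.span_le.2 (Set.range_subset_iff.2 hBA))
  show Module.finrank F (Submodule.span F (Set.range A)) = Module.finrank F (Submodule.span F (Set.range B))
  rw [h]

private lemma rank_submatrix'' {k l m n : Type} [Fintype l] [Fintype n]
    (A : Matrix k l F) (e₁ : m ≃ k) (e₂ : n ≃ l) :
    (A.submatrix e₁ e₂).rank = A.rank := by
  rw [Matrix.rank, Matrix.rank, Matrix.mulVecLin_submatrix,
    LinearMap.range_comp, LinearMap.range_comp]
  have h2 : LinearMap.range (LinearMap.funLeft F F (e₂.symm : l → n)) = ⊤ :=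
    LinearMap.range_eq_top.2 (LinearMap.funLeft_surjective_of_injective _ _ _ e₂.symm.injective)
  rw [h2, Submodule.map_top]
  exact (((LinearMap.range A.mulVecLin).equivMapOfInjective _
    (LinearMap.funLeft_injective_of_surjective F F _ e₁.surjective)).finrank_eq).symm


private lemma rank_option_pivot {m n : Type} [Fintype m] [Fintype n]
    (A : Matrix (Option m) (Option n) F) (ha : A none none ≠ 0) :
    A.rank = 1 + (Matrix.of fun i j =>
      A (some i) (some j) - A (some i) none * A none (some j) / A none none).rank := by
  classical
  set S : Matrix m n F := Matrix.of fun i j =>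
      A (some i) (some j) - A (some i) none * A none (some j) / A none none with hSdef
  let ext0 : (m → F) →ₗ[F] (Option m → F) :=
    { toFun := fun v o => o.elim 0 v
      map_add' := fun v w => by funext o; cases o <;> simp
      map_smul' := fun c v => by funext o; cases o <;> simp }
  have hinj : Function.Injective ext0 := fun v w h => funext fun i => congrFun h (some i)
  have hid : ∀ j : n, Aᵀ (some j) = ext0 (Sᵀ j) + (A none (some j) / A none none) • Aᵀ none := by
    intro j
    funext o
    cases o with
    | none =>
      show A none (some j) = (0:F) + A none (some j) / A none none * A none none
      field_simp
      ring
    | some i =>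
      show A (some i) (some j) =
        (A (some i) (some j) - A (some i) none * A none (some j) / A none none)
          + A none (some j) / A none none * A (some i) none
      field_simp
      ring
  have key : Submodule.span F (Set.range Aᵀ) =
      (Submodule.span F {Aᵀ none}) ⊔
        Submodule.map ext0 (Submodule.span F (Set.range Sᵀ)) := by
    apply le_antisymm
    · rw [Submodule.span_le]
      rintro _ ⟨j, rfl⟩
      cases j with
      | none => exact Submodule.mem_sup_left (Submodule.mem_span_singleton_self _)
      | some j =>
        rw [hid j]
        exact add_mem
          (Submodule.mem_sup_right (Submodule.mem_map_of_mem
            (Submodule.subset_span (Set.mem_range_self j))))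
          (Submodule.smul_mem _ _ (Submodule.mem_sup_left (Submodule.mem_span_singleton_self _)))
    · apply sup_le
      · rw [Submodule.span_singleton_le_iff_mem]
        exact Submodule.subset_span (Set.mem_range_self none)
      · rw [Submodule.map_span, Submodule.span_le]
        rintro _ ⟨_, ⟨j, rfl⟩, rfl⟩
        have h2 : ext0 (Sᵀ j) = Aᵀ (some j) - (A none (some j) / A none none) • Aᵀ none := by
          rw [hid j]; abel
        rw [h2]
        exact sub_mem (Submodule.subset_span (Set.mem_range_self _))
          (Submodule.smul_mem _ _ (Submodule.subset_span (Set.mem_range_self _)))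
  have hdisj : Submodule.span F {Aᵀ none} ⊓
      Submodule.map ext0 (Submodule.span F (Set.range Sᵀ)) = ⊥ := by
    rw [eq_bot_iff]
    rintro v ⟨hv1, hv2⟩
    obtain ⟨k, rfl⟩ := Submodule.mem_span_singleton.1 hv1
    obtain ⟨w, -, hw⟩ := hv2
    have hk : k * A none none = 0 := by
      have h0 := congrFun hw none
      simpa [ext0] using h0
    rcases mul_eq_zero.1 hk with h | h
    · simp [h]
    · exact absurd h ha
  rw [Matrix.rank_eq_finrank_span_cols]
  show Module.finrank F (Submodule.span F (Set.range Aᵀ)) = _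
  rw [key]
  have hdim := Submodule.finrank_sup_add_finrank_inf_eq (Submodule.span F {Aᵀ none})
      (Submodule.map ext0 (Submodule.span F (Set.range Sᵀ)))
  rw [hdisj, finrank_bot, add_zero] at hdim
  rw [hdim]
  congr 1
  · refine finrank_span_singleton ?_
    intro h
    exact ha (by rw [show A none none = Aᵀ none none from rfl, h]; rfl)
  · rw [Matrix.rank_eq_finrank_span_cols S]
    exact (((Submodule.span F (Set.range Sᵀ)).equivMapOfInjective ext0 hinj).finrank_eq).symm


private lemma rank_eq_of_row_ops {m n : Type} [Fintype m] [Fintype n] (A B : Matrix m n F)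
    (x' y' : m) (a b : F) (ha : a ≠ 0) (hb : b ≠ 0) (f g : m → F)
    (h1 : A x' = a • B y') (h2 : A y' = b • B x')
    (h3 : ∀ s, s ≠ x' → s ≠ y' → A s = B s + f s • B x' + g s • B y') :
    A.rank = B.rank := by
  have hBy : B y' = a⁻¹ • A x' := by rw [h1, smul_smul, inv_mul_cancel₀ ha, one_smul]
  have hBx : B x' = b⁻¹ • A y' := by rw [h2, smul_smul, inv_mul_cancel₀ hb, one_smul]
  apply span_rank_eq
  · intro s
    by_cases hsx : s = x'
    · rw [hsx, h1]
      exact Submodule.smul_mem _ _ (Submodule.subset_span (Set.mem_range_self _))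
    · by_cases hsy : s = y'
      · rw [hsy, h2]
        exact Submodule.smul_mem _ _ (Submodule.subset_span (Set.mem_range_self _))
      · rw [h3 s hsx hsy]
        exact add_mem (add_mem (Submodule.subset_span (Set.mem_range_self _))
          (Submodule.smul_mem _ _ (Submodule.subset_span (Set.mem_range_self _))))
          (Submodule.smul_mem _ _ (Submodule.subset_span (Set.mem_range_self _)))
  · intro s
    have mBx : B x' ∈ Submodule.span F (Set.range A) := by
      rw [hBx]
      exact Submodule.smul_mem _ _ (Submodule.subset_span (Set.mem_range_self _))
    have mBy : B y' ∈ Submodule.span F (Set.range A) := by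
      rw [hBy]
      exact Submodule.smul_mem _ _ (Submodule.subset_span (Set.mem_range_self _))
    by_cases hsx : s = x'
    · rw [hsx]; exact mBx
    · by_cases hsy : s = y'
      · rw [hsy]; exact mBy
      · have : B s = A s - f s • B x' - g s • B y' := by rw [h3 s hsx hsy]; abel
        rw [this]
        exact sub_mem (sub_mem (Submodule.subset_span (Set.mem_range_self _))
          (Submodule.smul_mem _ _ mBx)) (Submodule.smul_mem _ _ mBy)

private lemma rank_eq_of_pivot_schur {m n : Type} [Fintype m] [Fintype n]
    (A B : Matrix m n F) (x' : m) (y' : n)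
    (hA : A x' y' ≠ 0) (hB : B x' y' ≠ 0)
    (hS : ∀ (i : m) (j : n), i ≠ x' → j ≠ y' →
      A i j - A i y' * A x' j / A x' y' = B i j - B i y' * B x' j / B x' y') :
    A.rank = B.rank := by
  rw [← rank_submatrix'' A (Equiv.optionSubtypeNe x') (Equiv.optionSubtypeNe y'),
    ← rank_submatrix'' B (Equiv.optionSubtypeNe x') (Equiv.optionSubtypeNe y')]
  rw [rank_option_pivot _ (show A x' y' ≠ 0 from hA),
    rank_option_pivot _ (show B x' y' ≠ 0 from hB)]
  congr 1
  have : (Matrix.of fun (i : {a // a ≠ x'}) (j : {b // b ≠ y'}) =>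
        A ↑i ↑j - A ↑i y' * A x' ↑j / A x' y') =
      (Matrix.of fun (i : {a // a ≠ x'}) (j : {b // b ≠ y'}) =>
        B ↑i ↑j - B ↑i y' * B x' ↑j / B x' y') := by
    ext i j
    exact hS i.1 j.1 i.2 j.2
  exact congrArg Matrix.rank this

end RankHelpers


/-- Pivot complementation preserves the cut-rank function. -/
theorem pivotComp_cutrk {F V : Type} [Field F] [Fintype V]
    (σ : F → F) (hσ : IsSesquiMorphism σ)
    (M : Matrix V V F) (hM : IsSigmaSymmGraph σ M)
    (x y : V) (hxy : M x y ≠ 0) :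
    ∀ X : Set V, cutrk (pivotComp σ M x y) X = cutrk M X := by
  obtain ⟨hinv, φ, hφ⟩ := hσ
  have h1 : σ 1 ≠ 0 := by
    intro h
    have h2 := hφ 1
    rw [_root_.map_one, h, div_zero] at h2
    exact one_ne_zero h2
  have hσ0 : σ 0 = 0 := by
    have h2 := hφ 0
    rw [_root_.map_zero] at h2
    rcases div_eq_zero_iff.1 h2.symm with h | h
    · exact h
    · exact absurd h h1
  have hyx : M y x ≠ 0 := fun h => hxy (by rw [hM.2 x y, h, hσ0])
  have hne : x ≠ y := fun h => hxy (by rw [h, hM.1 y])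
  intro X
  unfold cutrk
  by_cases hx : x ∈ X <;> by_cases hy : y ∈ X
  · -- x ∈ X, y ∈ X : row operations
    refine rank_eq_of_row_ops _ _ (⟨x, hx⟩ : X) (⟨y, hy⟩ : X)
      (M y x)⁻¹ (σ 1 / M x y) (inv_ne_zero hyx) (div_ne_zero h1 hxy)
      (fun s => -(M ↑s y / M x y)) (fun s => -(M ↑s x / M y x)) ?_ ?_ ?_
    · funext u
      have hux : (u : V) ≠ x := fun h => u.2 (by rw [h]; exact hx)
      have huy : (u : V) ≠ y := fun h => u.2 (by rw [h]; exact hy)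
      show pivotComp σ M x y x ↑u = (M y x)⁻¹ * M y ↑u
      rw [pivot_xu σ M hne hux huy, div_eq_inv_mul]
    · funext u
      have hux : (u : V) ≠ x := fun h => u.2 (by rw [h]; exact hx)
      have huy : (u : V) ≠ y := fun h => u.2 (by rw [h]; exact hy)
      show pivotComp σ M x y y ↑u = (σ 1 / M x y) * M x ↑u
      rw [pivot_yu σ M hne hux huy]; ring
    · intro s hsx' hsy'
      funext u
      have hux : (u : V) ≠ x := fun h => u.2 (by rw [h]; exact hx)
      have huy : (u : V) ≠ y := fun h => u.2 (by rw [h]; exact hy)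
      have hsx : (s : V) ≠ x := fun h => hsx' (Subtype.ext h)
      have hsy : (s : V) ≠ y := fun h => hsy' (Subtype.ext h)
      have hsu : (s : V) ≠ ↑u := fun h => u.2 (h ▸ s.2)
      show pivotComp σ M x y ↑s ↑u
          = M ↑s ↑u + -(M ↑s y / M x y) * M x ↑u + -(M ↑s x / M y x) * M y ↑u
      rw [pivot_su σ M hsu hsx hsy hux huy]; ring
  · -- x ∈ X, y ∉ X : Schur complement at (x, y)
    refine rank_eq_of_pivot_schur _ _ (⟨x, hx⟩ : X) (⟨y, hy⟩ : (Xᶜ : Set V)) ?_ hxy ?_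
    · show pivotComp σ M x y x y ≠ 0
      rw [pivot_xy σ M hne]
      exact div_ne_zero (neg_ne_zero.2 one_ne_zero) hyx
    · intro i j hi hj
      have hsx : (i : V) ≠ x := fun h => hi (Subtype.ext h)
      have hsy : (i : V) ≠ y := fun h => hy (h ▸ i.2)
      have hux : (j : V) ≠ x := fun h => j.2 (by rw [h]; exact hx)
      have huy : (j : V) ≠ y := fun h => hj (Subtype.ext h)
      have hsu : (i : V) ≠ (j : V) := fun h => j.2 (h ▸ i.2)
      show pivotComp σ M x y ↑i ↑j
            - pivotComp σ M x y ↑i y * pivotComp σ M x y x ↑j / pivotComp σ M x y x y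
          = M ↑i ↑j - M ↑i y * M x ↑j / M x y
      rw [pivot_su σ M hsu hsx hsy hux huy, pivot_sy σ M hne hsx hsy,
        pivot_xu σ M hne hux huy, pivot_xy σ M hne]
      field_simp
      ring
  · -- x ∉ X, y ∈ X : Schur complement at (y, x)
    refine rank_eq_of_pivot_schur _ _ (⟨y, hy⟩ : X) (⟨x, hx⟩ : (Xᶜ : Set V)) ?_ hyx ?_
    · show pivotComp σ M x y y x ≠ 0
      rw [pivot_yx σ M hne]
      exact div_ne_zero (neg_ne_zero.2 (pow_ne_zero 2 h1)) hxy
    · intro i j hi hj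
      have hsy : (i : V) ≠ y := fun h => hi (Subtype.ext h)
      have hsx : (i : V) ≠ x := fun h => hx (h ▸ i.2)
      have huy : (j : V) ≠ y := fun h => j.2 (by rw [h]; exact hy)
      have hux : (j : V) ≠ x := fun h => hj (Subtype.ext h)
      have hsu : (i : V) ≠ (j : V) := fun h => j.2 (h ▸ i.2)
      show pivotComp σ M x y ↑i ↑j
            - pivotComp σ M x y ↑i x * pivotComp σ M x y y ↑j / pivotComp σ M x y y x
          = M ↑i ↑j - M ↑i x * M y ↑j / M y x
      rw [pivot_su σ M hsu hsx hsy hux huy, pivot_sx σ M hsx hsy,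
        pivot_yu σ M hne hux huy, pivot_yx σ M hne]
      field_simp
      ring
  · -- x ∉ X, y ∉ X : column operations (via transpose)
    refine ((Matrix.rank_transpose _).symm.trans ?_).trans (Matrix.rank_transpose _)
    refine rank_eq_of_row_ops _ _ (⟨x, hx⟩ : (Xᶜ : Set V)) (⟨y, hy⟩ : (Xᶜ : Set V))
      (σ 1 / M x y) (M y x)⁻¹ (div_ne_zero h1 hxy) (inv_ne_zero hyx)
      (fun u => -(M y ↑u / M y x)) (fun u => -(M x ↑u / M x y)) ?_ ?_ ?_
    · funext s
      have hsx : (s : V) ≠ x := fun h => hx (h ▸ s.2)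
      have hsy : (s : V) ≠ y := fun h => hy (h ▸ s.2)
      show pivotComp σ M x y ↑s x = (σ 1 / M x y) * M ↑s y
      rw [pivot_sx σ M hsx hsy]; ring
    · funext s
      have hsx : (s : V) ≠ x := fun h => hx (h ▸ s.2)
      have hsy : (s : V) ≠ y := fun h => hy (h ▸ s.2)
      show pivotComp σ M x y ↑s y = (M y x)⁻¹ * M ↑s x
      rw [pivot_sy σ M hne hsx hsy, div_eq_inv_mul]
    · intro u hux' huy'
      funext s
      have hsx : (s : V) ≠ x := fun h => hx (h ▸ s.2)
      have hsy : (s : V) ≠ y := fun h => hy (h ▸ s.2)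
      have hux : (u : V) ≠ x := fun h => hux' (Subtype.ext h)
      have huy : (u : V) ≠ y := fun h => huy' (Subtype.ext h)
      have hsu : (s : V) ≠ (u : V) := fun h => u.2 (h ▸ s.2)
      show pivotComp σ M x y ↑s ↑u
          = M ↑s ↑u + -(M y ↑u / M y x) * M ↑s x + -(M x ↑u / M x y) * M ↑s y
      rw [pivot_su σ M hsu hsx hsy hux huy]; ring
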